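/- For reduced cyclic words V and W, every linked pair (P,Q) ∈ LP₂(V,W) satisfies: P is a subword of V^j and Q is a subword of W^k with j < 2 + len(W)/len(V) and k < 2 + len(V)/len(W). -/

import Mathlib

/-!
Combinatorial model of the Goldman–Turaev Lie bialgebra of curves on a surface
with boundary, following M. Chas, "Combinatorial Lie bialgebras of curves on
surfaces".

The alphabet `𝔸ₙ = {a₁,…,aₙ, ā₁,…,āₙ}` is modelled by `Letter n := Fin n × Bool`,
with the bar involution flipping the boolean.  Linear words are lists of letters;
a cyclic word is a list up to rotation (`List.IsRotated`).
-/

open List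

abbrev Letter (n : ℕ) := Fin n × Bool

namespace ChasCW

variable {n : ℕ}

/-- The bar involution `x ↦ x̄` on letters. -/
def bar (x : Letter n) : Letter n := (x.1, !x.2)

/-- The formal inverse `W̄` of a linear word `W`. -/
def wordInv (w : List (Letter n)) : List (Letter n) := (w.map bar).reverse

/-- A linear word is freely reduced if no letter is followed by its inverse. -/
def Reduced (w : List (Letter n)) : Prop := w.Chain' (fun a b => b ≠ bar a)

/-- A nonempty word all of whose cyclic rotations are freely reduced:
a representative of a reduced cyclic word. -/
def CyclicallyReduced (w : List (Letter n)) : Prop :=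
  w ≠ [] ∧ ∀ i, Reduced (w.rotate i)

/-- The type of cyclic words: lists of letters up to rotation. -/
abbrev CWord (n : ℕ) := Quotient (List.IsRotated.setoid (Letter n))

/-- The cyclic word `c(w)` determined by a linear word `w`. -/
def cw (w : List (Letter n)) : CWord n := Quotient.mk _ w

/-- A surface symbol: a reduced cyclic word containing every letter of the
alphabet exactly once. -/
def SurfaceSymbol (O : List (Letter n)) : Prop :=
  CyclicallyReduced O ∧ ∀ x : Letter n, O.count x = 1

/-- `w` embeds injectively and orientation-preservingly as a cyclic subsequence
of the cyclic word `O`. -/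
def CyclicEmbeds (w O : List (Letter n)) : Prop :=
  w.Nodup ∧ ∃ i ≤ w.length, ∃ j ≤ O.length, (w.rotate i).Sublist (O.rotate j)

open Classical in
/-- The orientation `o(w) ∈ {-1,0,1}` of a cyclic word relative to the surface
symbol `O`: `1` for an orientation-preserving embedding of rings, `-1` for an
orientation-reversing one, `0` otherwise. -/
noncomputable def orient (O w : List (Letter n)) : ℤ :=
  if CyclicEmbeds w O then 1 else if CyclicEmbeds w O.reverse then -1 else 0

/-- Case (1) of Definition 2.1: `P = p₁p₂`, `Q = q₁q₂` and
`o(c(p̄₁q̄₁p₂q₂)) ≠ 0`. -/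
def Linked1 (O : List (Letter n)) (p₁ p₂ q₁ q₂ : Letter n) : Prop :=
  Reduced [p₁, p₂] ∧ Reduced [q₁, q₂] ∧ orient O [bar p₁, bar q₁, p₂, q₂] ≠ 0

/-- Case (2) of Definition 2.1: `P = p₁Yp₂`, `Q = q₁Yq₂`, `p₁ ≠ q₁`, `p₂ ≠ q₂`,
`Y = x₁X x₂` nonempty, and `o(c(p̄₁q̄₁x₁)) = o(c(p₂q₂x̄₂))`. -/
def Linked2 (O : List (Letter n)) (p₁ p₂ q₁ q₂ x₁ x₂ : Letter n)
    (Y : List (Letter n)) : Prop :=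
  Y ≠ [] ∧ Y.head? = some x₁ ∧ Y.getLast? = some x₂ ∧
  p₁ ≠ q₁ ∧ p₂ ≠ q₂ ∧
  Reduced (p₁ :: (Y ++ [p₂])) ∧ Reduced (q₁ :: (Y ++ [q₂])) ∧
  orient O [bar p₁, bar q₁, x₁] = orient O [p₂, q₂, bar x₂]

/-- Case (3) of Definition 2.1: `P = p₁Yp₂`, `Q = q₁Ȳq₂`, `p₁ ≠ q̄₂`, `p₂ ≠ q̄₁`,
`Y = x₁X x₂` nonempty, and `o(c(q₂p̄₁x₁)) = o(c(q̄₁p₂x̄₂))`. -/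
def Linked3 (O : List (Letter n)) (p₁ p₂ q₁ q₂ x₁ x₂ : Letter n)
    (Y : List (Letter n)) : Prop :=
  Y ≠ [] ∧ Y.head? = some x₁ ∧ Y.getLast? = some x₂ ∧
  p₁ ≠ bar q₂ ∧ p₂ ≠ bar q₁ ∧
  Reduced (p₁ :: (Y ++ [p₂])) ∧ Reduced (q₁ :: (wordInv Y ++ [q₂])) ∧
  orient O [q₂, bar p₁, x₁] = orient O [bar q₁, p₂, bar x₂]

/-- `(P,Q)` is an `O`-linked pair (Definition 2.1). -/
def LinkedPair (O P Q : List (Letter n)) : Prop :=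
  (∃ p₁ p₂ q₁ q₂, P = [p₁, p₂] ∧ Q = [q₁, q₂] ∧ Linked1 O p₁ p₂ q₁ q₂) ∨
  (∃ p₁ p₂ q₁ q₂ x₁ x₂ Y, P = p₁ :: (Y ++ [p₂]) ∧ Q = q₁ :: (Y ++ [q₂]) ∧
    Linked2 O p₁ p₂ q₁ q₂ x₁ x₂ Y) ∨
  (∃ p₁ p₂ q₁ q₂ x₁ x₂ Y, P = p₁ :: (Y ++ [p₂]) ∧ Q = q₁ :: (wordInv Y ++ [q₂]) ∧
    Linked3 O p₁ p₂ q₁ q₂ x₁ x₂ Y)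

/-- The sign of a linked pair `(P,Q)`, computed from the (unique) decomposition
of `P` and `Q` prescribed by Definition 2.1. -/
noncomputable def signLP (O P Q : List (Letter n)) : ℤ :=
  match P, Q with
  | p₁ :: P', q₁ :: Q' =>
    match P'.getLast?, Q'.getLast? with
    | some p₂, some q₂ =>
      let Y := P'.dropLast
      let Z := Q'.dropLast
      if Y = [] then orient O [bar p₁, bar q₁, p₂, q₂]
      else
        match Y.head?, Y.getLast? with
        | some x₁, some _ =>
          if Z = wordInv Y then orient O [q₂, bar p₁, x₁]
          else orient O [bar p₁, bar q₁, x₁]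
        | _, _ => 0
    | _, _ => 0
  | _, _ => 0

/-- The subword of length `l` of (a large power of) the cyclic word `V`,
starting at position `i`.  This encodes occurrences of subwords of powers
of `V`. -/
def segment (V : List (Letter n)) (i l : ℕ) : List (Letter n) :=
  (((List.replicate (l + 1) V).flatten).rotate i).take l

/-- The set `LP₁(W)` of linked pairs of occurrences of subwords of `W`,
an occurrence being encoded by its starting position and its length. -/
def LP1 (O W : List (Letter n)) : Set ((ℕ × ℕ) × (ℕ × ℕ)) :=
  {e | e.1.1 < W.length ∧ e.2.1 < W.length ∧ e.1.2 ≤ W.length ∧ e.2.2 ≤ W.length ∧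
    LinkedPair O (segment W e.1.1 e.1.2) (segment W e.2.1 e.2.2)}

/-- The set `LP₂(V,W)` of linked pairs of the pair of cyclic words `(V,W)`:
pairs of occurrences of subwords of powers of `V` resp. `W` which are linked.
(The normalization `len V^{j-1} < len P ≤ len V^j` is implicit in the encoding
of an occurrence by a starting position `< len V` and a length.) -/
def LP2 (O V W : List (Letter n)) : Set ((ℕ × ℕ) × (ℕ × ℕ)) :=
  {e | e.1.1 < V.length ∧ e.2.1 < W.length ∧
    LinkedPair O (segment V e.1.1 e.1.2) (segment W e.2.1 e.2.2)}

end ChasCW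

namespace ChasCW


/-- Periodic extension of a nonempty list. -/
def pget (V : List (Letter n)) (hv : 0 < V.length) (m : ℕ) : Letter n :=
  V[m % V.length]'(Nat.mod_lt _ hv)

lemma pget_add (V : List (Letter n)) (hv : 0 < V.length) (m : ℕ) :
    pget V hv (m + V.length) = pget V hv m := by
  simp [pget, Nat.add_mod_right]

lemma length_flatten_replicate (V : List (Letter n)) (k : ℕ) :
    ((List.replicate k V).flatten).length = k * V.length := by
  simp [List.length_flatten, List.map_replicate, List.sum_replicate, smul_eq_mul]

lemma getElem_flatten_replicate (V : List (Letter n)) (hv : 0 < V.length) :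
    ∀ (k m : ℕ) (hm : m < ((List.replicate k V).flatten).length),
    ((List.replicate k V).flatten)[m] = pget V hv m := by
  intro k
  induction k with
  | zero => intro m hm; simp at hm
  | succ k ih =>
    intro m hm
    simp only [List.replicate_succ, List.flatten_cons]
    rcases lt_or_ge m V.length with h | h
    · rw [List.getElem_append_left h, pget]
      congr 1
      exact (Nat.mod_eq_of_lt h).symm
    · rw [List.getElem_append_right h]
      have hm' : m - V.length < ((List.replicate k V).flatten).length := by
        rw [length_flatten_replicate] at hm ⊢
        rw [Nat.succ_mul] at hm
        omega
      rw [ih (m - V.length) hm']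
      unfold pget
      congr 1
      conv_rhs => rw [← Nat.sub_add_cancel h, Nat.add_mod_right]

lemma length_segment (V : List (Letter n)) (hv : 0 < V.length) (i l : ℕ) :
    (segment V i l).length = l := by
  rw [segment, List.length_take, List.length_rotate, length_flatten_replicate]
  refine min_eq_left ?_
  calc l ≤ l + 1 := by omega
  _ = (l + 1) * 1 := by ring
  _ ≤ (l + 1) * V.length := Nat.mul_le_mul_left _ hv

lemma getElem_segment (V : List (Letter n)) (hv : 0 < V.length) (i l t : ℕ)
    (ht : t < l) (ht' : t < (segment V i l).length) :
    (segment V i l)[t] = pget V hv (i + t) := by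
  simp only [segment]
  rw [List.getElem_take, List.getElem_rotate, getElem_flatten_replicate V hv]
  unfold pget
  congr 1
  rw [length_flatten_replicate, Nat.mod_mod_of_dvd _ ⟨l + 1, by ring⟩]
  congr 1
  omega

/-- Euclid-style common-period lemma. -/
lemma euclid {α : Type*} : ∀ (k p q N : ℕ) (h : ℕ → α), p + q ≤ k → 0 < p → 0 < q →
    p + q ≤ N + 1 → (∀ t, t + p < N → h (t + p) = h t) →
    (∀ t, t + q < N → h (t + q) = h t) → h (p - 1) = h (q - 1) := by
  intro k
  induction k with
  | zero => intro p q N h hk hp0 hq0; omega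
  | succ k ih =>
    intro p q N h hk hp0 hq0 hN hp hq
    rcases lt_trichotomy p q with hlt | rfl | hlt
    · have e1 : h (q - 1) = h (q - p - 1) := by
        have := hp (q - p - 1) (by omega)
        rw [show q - p - 1 + p = q - 1 by omega] at this
        exact this
      have e2 : h (p - 1) = h (q - p - 1) := by
        refine ih p (q - p) (N - p) h (by omega) hp0 (by omega) (by omega)
          (fun t ht => hp t (by omega)) (fun t ht => ?_)
        have h1 := hp (t + (q - p)) (by omega)
        rw [show t + (q - p) + p = t + q by omega] at h1
        exact h1.symm.trans (hq t (by omega))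
      exact e2.trans e1.symm
    · rfl
    · have e1 : h (p - 1) = h (p - q - 1) := by
        have := hq (p - q - 1) (by omega)
        rw [show p - q - 1 + q = p - 1 by omega] at this
        exact this
      have e2 : h (q - 1) = h (p - q - 1) := by
        refine ih q (p - q) (N - q) h (by omega) hq0 (by omega) (by omega)
          (fun t ht => hq t (by omega)) (fun t ht => ?_)
        have h1 := hq (t + (p - q)) (by omega)
        rw [show t + (p - q) + q = t + p by omega] at h1
        exact h1.symm.trans (hp t (by omega))
      exact e1.trans e2.symm

lemma rat_bound (v w a : ℕ) (hv : 0 < v) (ha : 1 ≤ a) (h : v * (a - 1) < v + w) :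
    (a : ℚ) < 2 + (w : ℚ) / (v : ℚ) := by
  obtain ⟨a', rfl⟩ : ∃ a', a = a' + 1 := ⟨a - 1, by omega⟩
  simp only [Nat.add_sub_cancel] at h
  have hv' : (0 : ℚ) < v := by exact_mod_cast hv
  rw [show (2 : ℚ) + w / v = (2 * v + w) / v by field_simp, lt_div_iff₀ hv']
  have hnat : (a' + 1) * v < 2 * v + w := by
    have := Nat.add_lt_add_right h v
    calc (a' + 1) * v = v * a' + v := by ring
    _ < (v + w) + v := this
    _ = 2 * v + w := by ring
  exact_mod_cast hnat


lemma bar_bar (x : Letter n) : bar (bar x) = x := by simp [bar]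

/-- Proposition 2.12: every linked pair
`((i, len P), (j', len Q)) ∈ LP₂(V,W)`, where `P` is a subword of `V^a` with
`len V^{a-1} < len P ≤ len V^a` and `Q` is a subword of `W^b` with
`len W^{b-1} < len Q ≤ len W^b`, satisfies `a < 2 + len W / len V` and
`b < 2 + len V / len W`. -/
theorem LP2_power_bound {n : ℕ} (O V W : List (Letter n))
    (hO : SurfaceSymbol O) (hV : CyclicallyReduced V) (hW : CyclicallyReduced W)
    (e : (ℕ × ℕ) × (ℕ × ℕ)) (he : e ∈ LP2 O V W)
    (a b : ℕ) (ha : 1 ≤ a) (hb : 1 ≤ b)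
    (ha1 : V.length * (a - 1) < e.1.2) (ha2 : e.1.2 ≤ V.length * a)
    (hb1 : W.length * (b - 1) < e.2.2) (hb2 : e.2.2 ≤ W.length * b) :
    (a : ℚ) < 2 + (W.length : ℚ) / (V.length : ℚ) ∧
      (b : ℚ) < 2 + (V.length : ℚ) / (W.length : ℚ) := by
  obtain ⟨hi, hj, hLP⟩ := he
  have hv : 0 < V.length := List.length_pos_iff.mpr hV.1
  have hw : 0 < W.length := List.length_pos_iff.mpr hW.1
  have hPlen := length_segment V hv e.1.1 e.1.2
  have hQlen := length_segment W hw e.2.1 e.2.2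
  suffices key : e.1.2 ≤ V.length + W.length ∧ e.2.2 ≤ V.length + W.length by
    refine ⟨rat_bound _ _ _ hv ha (lt_of_lt_of_le ha1 key.1),
      rat_bound _ _ _ hw hb (lt_of_lt_of_le hb1 (by omega))⟩
  rcases hLP with ⟨p₁, p₂, q₁, q₂, hP, hQ, _⟩ |
    ⟨p₁, p₂, q₁, q₂, x₁, x₂, Y, hP, hQ, hY, hx₁, hx₂, hpq, hpq', hr1, hr2, hor⟩ |
    ⟨p₁, p₂, q₁, q₂, x₁, x₂, Y, hP, hQ, hY, hx₁, hx₂, hpq, hpq', hr1, hr2, hor⟩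
  · have h1 : e.1.2 = 2 := by simpa [hPlen] using congrArg List.length hP
    have h2 : e.2.2 = 2 := by simpa [hQlen] using congrArg List.length hQ
    omega
  · -- Case 2 : P = p₁ Y p₂, Q = q₁ Y q₂, p₁ ≠ q₁
    set m := Y.length with hmdef
    have hm1 : e.1.2 = m + 2 := by simpa [hPlen] using congrArg List.length hP
    have hm2 : e.2.2 = m + 2 := by simpa [hQlen] using congrArg List.length hQ
    suffices hkey : m + 2 ≤ V.length + W.length by omega
    by_contra hbig
    push_neg at hbig
    have hm : V.length + W.length ≤ m + 1 := by omega
    have FP : ∀ t, ∀ ht : t < m + 2,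
        pget V hv (e.1.1 + t) = (p₁ :: (Y ++ [p₂]))[t]'(by simp; omega) := by
      intro t ht
      have h := getElem_segment V hv e.1.1 e.1.2 t (by omega) (by rw [hPlen]; omega)
      simp only [hP] at h
      exact h.symm
    have FQ : ∀ t, ∀ ht : t < m + 2,
        pget W hw (e.2.1 + t) = (q₁ :: (Y ++ [q₂]))[t]'(by simp; omega) := by
      intro t ht
      have h := getElem_segment W hw e.2.1 e.2.2 t (by omega) (by rw [hQlen]; omega)
      simp only [hQ] at h
      exact h.symm
    have eP : ∀ t, ∀ ht : t < m, pget V hv (e.1.1 + (t + 1)) = Y[t] := by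
      intro t ht
      rw [FP (t + 1) (by omega), List.getElem_cons_succ, List.getElem_append_left ht]
    have eQ : ∀ t, ∀ ht : t < m, pget W hw (e.2.1 + (t + 1)) = Y[t] := by
      intro t ht
      rw [FQ (t + 1) (by omega), List.getElem_cons_succ, List.getElem_append_left ht]
    have ep₁ : pget V hv e.1.1 = p₁ := by
      have := FP 0 (by omega)
      simpa using this
    have eq₁ : pget W hw e.2.1 = q₁ := by
      have := FQ 0 (by omega)
      simpa using this
    have main := euclid (V.length + W.length) V.length W.length m
      (fun t => pget V hv (e.1.1 + 1 + t)) le_rfl hv hw hm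
      (fun t _ => by
        show pget V hv (e.1.1 + 1 + (t + V.length)) = pget V hv (e.1.1 + 1 + t)
        rw [show e.1.1 + 1 + (t + V.length) = (e.1.1 + 1 + t) + V.length by omega]
        exact pget_add V hv _)
      (fun t ht => by
        show pget V hv (e.1.1 + 1 + (t + W.length)) = pget V hv (e.1.1 + 1 + t)
        rw [show e.1.1 + 1 + (t + W.length) = e.1.1 + ((t + W.length) + 1) by omega,
          eP (t + W.length) (by omega),
          show e.1.1 + 1 + t = e.1.1 + (t + 1) by omega, eP t (by omega),
          ← eQ (t + W.length) (by omega), ← eQ t (by omega),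
          show e.2.1 + (t + W.length + 1) = (e.2.1 + (t + 1)) + W.length by omega]
        exact pget_add W hw _)
    rw [show e.1.1 + 1 + (V.length - 1) = e.1.1 + V.length by omega, pget_add V hv, ep₁,
      show e.1.1 + 1 + (W.length - 1) = e.1.1 + ((W.length - 1) + 1) by omega,
      eP (W.length - 1) (by omega), ← eQ (W.length - 1) (by omega),
      show e.2.1 + (W.length - 1 + 1) = e.2.1 + W.length by omega, pget_add W hw, eq₁] at main
    exact hpq main
  · -- Case 3 : P = p₁ Y p₂, Q = q₁ Ȳ q₂, p₁ ≠ bar q₂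
    set m := Y.length with hmdef
    have hwm : (wordInv Y).length = m := by simp [wordInv, hmdef]
    have hm1 : e.1.2 = m + 2 := by simpa [hPlen] using congrArg List.length hP
    have hm2 : e.2.2 = m + 2 := by simpa [hQlen, wordInv] using congrArg List.length hQ
    suffices hkey : m + 2 ≤ V.length + W.length by omega
    by_contra hbig
    push_neg at hbig
    have hm : V.length + W.length ≤ m + 1 := by omega
    have FP : ∀ t, ∀ ht : t < m + 2,
        pget V hv (e.1.1 + t) = (p₁ :: (Y ++ [p₂]))[t]'(by simp; omega) := by
      intro t ht
      have h := getElem_segment V hv e.1.1 e.1.2 t (by omega) (by rw [hPlen]; omega)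
      simp only [hP] at h
      exact h.symm
    have FQ : ∀ t, ∀ ht : t < m + 2,
        pget W hw (e.2.1 + t) = (q₁ :: (wordInv Y ++ [q₂]))[t]'(by simp [wordInv]; omega) := by
      intro t ht
      have h := getElem_segment W hw e.2.1 e.2.2 t (by omega) (by rw [hQlen]; omega)
      simp only [hQ] at h
      exact h.symm
    have eP : ∀ t, ∀ ht : t < m, pget V hv (e.1.1 + (t + 1)) = Y[t] := by
      intro t ht
      rw [FP (t + 1) (by omega), List.getElem_cons_succ, List.getElem_append_left ht]
    have ep₁ : pget V hv e.1.1 = p₁ := by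
      have := FP 0 (by omega)
      simpa using this
    have eQ' : ∀ u, ∀ hu : u < m,
        pget W hw (e.2.1 + (u + 1)) = bar (Y[m - 1 - u]'(by omega)) := by
      intro u hu
      rw [FQ (u + 1) (by omega), List.getElem_cons_succ,
        List.getElem_append_left (by omega : u < (wordInv Y).length)]
      simp only [wordInv]
      rw [List.getElem_reverse, List.getElem_map]
      congr 2
      simp
      omega
    have eq₂ : pget W hw (e.2.1 + (m + 1)) = q₂ := by
      rw [FQ (m + 1) (by omega), List.getElem_cons_succ,
        List.getElem_concat_length hwm.symm _]
    have eYQ : ∀ t, ∀ ht : t < m,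
        Y[t] = bar (pget W hw (e.2.1 + (m - t))) := by
      intro t ht
      have h := eQ' (m - 1 - t) (by omega)
      rw [show e.2.1 + (m - 1 - t + 1) = e.2.1 + (m - t) by omega] at h
      have h2 : (Y[m - 1 - (m - 1 - t)]'(by omega)) = Y[t]'ht := by
        congr 1
        omega
      rw [h2] at h
      rw [h, bar_bar]
    have main := euclid (V.length + W.length) V.length W.length m
      (fun t => pget V hv (e.1.1 + 1 + t)) le_rfl hv hw hm
      (fun t _ => by
        show pget V hv (e.1.1 + 1 + (t + V.length)) = pget V hv (e.1.1 + 1 + t)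
        rw [show e.1.1 + 1 + (t + V.length) = (e.1.1 + 1 + t) + V.length by omega]
        exact pget_add V hv _)
      (fun t ht => by
        show pget V hv (e.1.1 + 1 + (t + W.length)) = pget V hv (e.1.1 + 1 + t)
        rw [show e.1.1 + 1 + (t + W.length) = e.1.1 + ((t + W.length) + 1) by omega,
          eP (t + W.length) (by omega),
          show e.1.1 + 1 + t = e.1.1 + (t + 1) by omega, eP t (by omega),
          eYQ (t + W.length) (by omega), eYQ t (by omega)]
        congr 1
        conv_rhs => rw [show e.2.1 + (m - t) = (e.2.1 + (m - (t + W.length))) + W.length by omega]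
        exact (pget_add W hw _).symm)
    rw [show e.1.1 + 1 + (V.length - 1) = e.1.1 + V.length by omega, pget_add V hv, ep₁,
      show e.1.1 + 1 + (W.length - 1) = e.1.1 + ((W.length - 1) + 1) by omega,
      eP (W.length - 1) (by omega), eYQ (W.length - 1) (by omega),
      show e.2.1 + (m - (W.length - 1)) = e.2.1 + (m - (W.length - 1)) by rfl] at main
    have hq : pget W hw (e.2.1 + (m - (W.length - 1))) = q₂ := by
      rw [show e.2.1 + (m + 1) = (e.2.1 + (m - (W.length - 1))) + W.length by omega] at eq₂
      rw [← eq₂, pget_add W hw]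
    rw [hq] at main
    exact hpq main

end ChasCW
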